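/- Let ρ : G(α,β) → SL(2,ℂ) be an irreducible representation of the two-bridge knot group with tr ρ(μ) = 2 or tr ρ(μ) = −2. Then tr ρ(λ) = −2. -/

import Mathlib

open Matrix

noncomputable section

/-- `SL(2,ℂ)`. -/
abbrev SL2C := Matrix.SpecialLinearGroup (Fin 2) ℂ

/-- `ε_i = (−1)^⌊iβ/α⌋`. -/
def eps (α β : ℤ) (i : ℕ) : ℤ :=
  if Even (Int.fdiv ((i : ℤ) * β) α) then 1 else -1

/-- The word `w = y^{ε_1} x^{ε_2} y^{ε_3} ⋯ y^{ε_{α−2}} x^{ε_{α−1}}`. -/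
def wordG {G : Type*} [Group G] (α β : ℤ) (x y : G) : G :=
  ((List.range (α.toNat - 1)).map
    (fun j => (if (j + 1) % 2 = 1 then y else x) ^ eps α β (j + 1))).prod

/-- The reversed word `w* = x^{ε_1} y^{ε_2} ⋯ x^{ε_{α−2}} y^{ε_{α−1}}`. -/
def wordStarG {G : Type*} [Group G] (α β : ℤ) (x y : G) : G :=
  ((List.range (α.toNat - 1)).map
    (fun j => (if (j + 1) % 2 = 1 then x else y) ^ eps α β (j + 1))).prod

/-- `n = −Σ_{i=1}^{α−1} ε_i`. -/
def nval (α β : ℤ) : ℤ := -∑ i ∈ Finset.Icc 1 (α.toNat - 1), eps α β i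

/-- The single relation `x w (w y)⁻¹` of the two-bridge knot group. -/
def twoBridgeRel (α β : ℤ) : Set (FreeGroup Bool) :=
  { FreeGroup.of true * wordG α β (FreeGroup.of true) (FreeGroup.of false) *
      (wordG α β (FreeGroup.of true) (FreeGroup.of false) * FreeGroup.of false)⁻¹ }

/-- The two-bridge knot group `G(α,β) = ⟨x, y ∣ xw = wy⟩`. -/
abbrev KnotGroup (α β : ℤ) := PresentedGroup (twoBridgeRel α β)

/-- The generator `x`. -/
def xgen (α β : ℤ) : KnotGroup α β := PresentedGroup.of true

/-- The generator `y`. -/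
def ygen (α β : ℤ) : KnotGroup α β := PresentedGroup.of false

/-- The meridian `μ = x`. -/
def meridian (α β : ℤ) : KnotGroup α β := xgen α β

/-- The longitude `λ = x^{2n} w w*`. -/
def longitude (α β : ℤ) : KnotGroup α β :=
  xgen α β ^ (2 * nval α β) *
    wordG α β (xgen α β) (ygen α β) * wordStarG α β (xgen α β) (ygen α β)

/-- A representation is irreducible if no one-dimensional subspace of `ℂ²` is
invariant under all `ρ(g)`. -/
def IsIrreducibleRep {G : Type*} [Group G] (ρ : G →* SL2C) : Prop :=
  ¬ ∃ v : Fin 2 → ℂ, v ≠ 0 ∧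
      ∀ g : G, ∃ c : ℂ, (ρ g : Matrix (Fin 2) (Fin 2) ℂ) *ᵥ v = c • v


-- φ : anti-automorphism of SL2C fixing matrices with equal diagonal entries
def phiSL (g : SL2C) : SL2C :=
  ⟨!![(g : Matrix (Fin 2) (Fin 2) ℂ) 1 1, (g : Matrix (Fin 2) (Fin 2) ℂ) 0 1;
      (g : Matrix (Fin 2) (Fin 2) ℂ) 1 0, (g : Matrix (Fin 2) (Fin 2) ℂ) 0 0], by
    have hd := g.2
    rw [Matrix.det_fin_two] at hd
    rw [Matrix.det_fin_two_of]
    linear_combination hd⟩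

lemma phiSL_coe (g : SL2C) : (phiSL g : Matrix (Fin 2) (Fin 2) ℂ) =
    !![(g : Matrix (Fin 2) (Fin 2) ℂ) 1 1, (g : Matrix (Fin 2) (Fin 2) ℂ) 0 1;
      (g : Matrix (Fin 2) (Fin 2) ℂ) 1 0, (g : Matrix (Fin 2) (Fin 2) ℂ) 0 0] := rfl

lemma phiSL_mul (a b : SL2C) : phiSL (a * b) = phiSL b * phiSL a := by
  apply Subtype.ext
  rw [Matrix.SpecialLinearGroup.coe_mul, phiSL_coe, phiSL_coe, phiSL_coe]
  ext i j
  fin_cases i <;> fin_cases j <;>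
    simp [Matrix.SpecialLinearGroup.coe_mul, Matrix.mul_apply, Fin.sum_univ_two] <;> ring

lemma phiSL_one : phiSL 1 = 1 := by
  apply Subtype.ext
  rw [phiSL_coe]
  ext i j
  fin_cases i <;> fin_cases j <;>
    simp [Matrix.SpecialLinearGroup.coe_one, Matrix.one_apply]

lemma phiSL_inv (a : SL2C) : phiSL a⁻¹ = (phiSL a)⁻¹ := by
  have h : phiSL a * phiSL a⁻¹ = 1 := by
    rw [← phiSL_mul, inv_mul_cancel, phiSL_one]
  exact (eq_inv_of_mul_eq_one_left (by rw [← phiSL_mul, mul_inv_cancel, phiSL_one]))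

lemma phiSL_pow (a : SL2C) (n : ℕ) : phiSL (a ^ n) = phiSL a ^ n := by
  induction n with
  | zero => simpa using phiSL_one
  | succ n ih =>
      rw [pow_succ, phiSL_mul, ih, ← pow_succ']

lemma phiSL_zpow (a : SL2C) (k : ℤ) : phiSL (a ^ k) = phiSL a ^ k := by
  cases k with
  | ofNat n => simpa using phiSL_pow a n
  | negSucc n => rw [zpow_negSucc, zpow_negSucc, phiSL_inv, phiSL_pow]

lemma phiSL_list_prod (l : List SL2C) :
    phiSL l.prod = ((l.map phiSL).reverse).prod := by
  induction l with
  | nil => simpa using phiSL_one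
  | cons a l ih =>
      rw [List.prod_cons, phiSL_mul, ih, List.map_cons, List.reverse_cons,
        List.prod_append, List.prod_cons, List.prod_nil, mul_one]

lemma eps_palindrome (α β : ℤ) (hα1 : 1 < α) (hβodd : Odd β) (hcop : IsCoprime α β)
    (i : ℕ) (h1 : 1 ≤ i) (h2 : i ≤ α.toNat - 1) :
    eps α β (α.toNat - i) = eps α β i := by
  have hα0 : (0:ℤ) < α := by omega
  have htn : (α.toNat : ℤ) = α := Int.toNat_of_nonneg (by omega)
  have hilt : (i : ℤ) < α := by omega
  have hipos : (0:ℤ) < (i : ℤ) := by exact_mod_cast h1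
  have hcast : ((α.toNat - i : ℕ) : ℤ) = α - (i : ℤ) := by
    have : i ≤ α.toNat := by omega
    push_cast [this]
    omega
  have hndvd : ¬ (α ∣ (i : ℤ) * β) := by
    intro hd
    have : α ∣ (i : ℤ) := hcop.dvd_of_dvd_mul_right hd
    have := Int.le_of_dvd hipos this
    omega
  set q := (i : ℤ) * β / α with hq
  set r := (i : ℤ) * β % α with hr
  have hqr : α * q + r = (i : ℤ) * β := by
    rw [hq, hr]; exact Int.mul_ediv_add_emod _ _
  have hr0 : 0 ≤ r := Int.emod_nonneg _ (by omega)
  have hrlt : r < α := Int.emod_lt_of_pos _ hα0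
  have hrne : r ≠ 0 := by
    intro h
    exact hndvd (Int.dvd_of_emod_eq_zero (hr ▸ h))
  -- (α - i) * β = α * (β - q - 1) + (α - r)
  have hdiv2 : (α - (i:ℤ)) * β / α = β - q - 1 := by
    have h := (Int.ediv_emod_unique (a := (α - (i:ℤ)) * β) (b := α)
        (q := β - q - 1) (r := α - r) hα0).2 ⟨by linear_combination - hqr, by omega, by omega⟩
    exact h.1
  unfold eps
  rw [Int.fdiv_eq_ediv_of_nonneg _ (le_of_lt hα0), Int.fdiv_eq_ediv_of_nonneg _ (le_of_lt hα0), hcast, hdiv2]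
  have hpar : Even (β - q - 1) ↔ Even q := by
    obtain ⟨m, hm⟩ := hβodd
    simp only [Int.even_iff]
    omega
  simp only [hq] at hpar ⊢
  rw [if_congr hpar rfl rfl]

lemma map_wordG {G H : Type*} [Group G] [Group H] (f : G →* H) (α β : ℤ) (x y : G) :
    f (wordG α β x y) = wordG α β (f x) (f y) := by
  unfold wordG
  rw [map_list_prod, List.map_map]
  congr 1
  apply List.map_congr_left
  intro j _
  simp only [Function.comp_apply, apply_ite f, map_zpow]

lemma map_wordStarG {G H : Type*} [Group G] [Group H] (f : G →* H) (α β : ℤ) (x y : G) :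
    f (wordStarG α β x y) = wordStarG α β (f x) (f y) := by
  unfold wordStarG
  rw [map_list_prod, List.map_map]
  congr 1
  apply List.map_congr_left
  intro j _
  simp only [Function.comp_apply, apply_ite f, map_zpow]

lemma wordStar_eq_phi (α β : ℤ) (hα1 : 1 < α) (hαodd : Odd α) (hβodd : Odd β)
    (hcop : IsCoprime α β) (X Y : SL2C) (hX : phiSL X = X) (hY : phiSL Y = Y) :
    wordStarG α β X Y = phiSL (wordG α β X Y) := by
  unfold wordG wordStarG
  rw [phiSL_list_prod, List.map_map]
  have hmeven : Even (α.toNat - 1) := by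
    obtain ⟨m, hm⟩ := hαodd
    have : α.toNat = (2*m+1).toNat := by rw [← hm]
    have h2 : α.toNat = 2 * m.toNat + 1 := by omega
    exact ⟨m.toNat, by omega⟩
  obtain ⟨mm, hmm⟩ := hmeven
  congr 1
  apply List.ext_getElem
  · simp
  intro j h1 h2
  simp only [List.getElem_reverse, List.getElem_map, List.getElem_range, Function.comp_apply,
    List.length_map, List.length_range]
  have hj : j < α.toNat - 1 := by simpa using h1
  -- index on RHS is (α.toNat - 1) - 1 - j ; letter index k+1 = α.toNat - 1 - j
  rw [phiSL_zpow]
  have hidx : (α.toNat - 1) - 1 - j + 1 = α.toNat - (j + 1) := by omega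
  rw [hidx]
  have heps : eps α β (α.toNat - (j+1)) = eps α β (j+1) :=
    eps_palindrome α β hα1 hβodd hcop (j+1) (by omega) (by omega)
  rw [heps]
  congr 1
  rw [apply_ite phiSL, hX, hY]
  have : (α.toNat - (j+1)) % 2 = (j + 1 + 1) % 2 := by omega
  rw [this]
  rcases Nat.even_or_odd j with ⟨m, hm⟩ | ⟨m, hm⟩
  · have h1 : (j + 1) % 2 = 1 := by omega
    have h2 : (j + 1 + 1) % 2 = 0 := by omega
    simp [h1, h2]
  · have h1 : (j + 1) % 2 = 0 := by omega
    have h2 : (j + 1 + 1) % 2 = 1 := by omega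
    simp [h1, h2]

lemma x_mul_w_eq (α β : ℤ) :
    xgen α β * wordG α β (xgen α β) (ygen α β)
      = wordG α β (xgen α β) (ygen α β) * ygen α β := by
  have h : (PresentedGroup.mk (twoBridgeRel α β))
      (FreeGroup.of true * wordG α β (FreeGroup.of true) (FreeGroup.of false) *
        (wordG α β (FreeGroup.of true) (FreeGroup.of false) * FreeGroup.of false)⁻¹) = 1 := by
    apply (QuotientGroup.eq_one_iff _).2
    exact Subgroup.subset_normalClosure rfl
  rw [_root_.map_mul, _root_.map_mul, _root_.map_inv, _root_.map_mul, map_wordG] at h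
  have e1 : (PresentedGroup.mk (twoBridgeRel α β)) (FreeGroup.of true) = xgen α β := rfl
  have e2 : (PresentedGroup.mk (twoBridgeRel α β)) (FreeGroup.of false) = ygen α β := rfl
  rw [e1, e2] at h
  exact mul_inv_eq_one.mp h

lemma eigen_all {α β : ℤ} (ρ : KnotGroup α β →* SL2C)
    (v : Fin 2 → ℂ) (hv : v ≠ 0) (c d : ℂ)
    (hx : (ρ (xgen α β) : Matrix (Fin 2) (Fin 2) ℂ) *ᵥ v = c • v)
    (hy : (ρ (ygen α β) : Matrix (Fin 2) (Fin 2) ℂ) *ᵥ v = d • v) :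
    ∀ g, ∃ e : ℂ, (ρ g : Matrix (Fin 2) (Fin 2) ℂ) *ᵥ v = e • v := by
  intro g
  have hg : g ∈ Subgroup.closure (Set.range (PresentedGroup.of : Bool → KnotGroup α β)) := by
    rw [PresentedGroup.closure_range_of]; exact Subgroup.mem_top g
  refine Subgroup.closure_induction ?_ ?_ ?_ ?_ hg
  · rintro x ⟨b, rfl⟩
    cases b
    · exact ⟨d, hy⟩
    · exact ⟨c, hx⟩
  · refine ⟨1, ?_⟩
    rw [_root_.map_one]
    simp [Matrix.SpecialLinearGroup.coe_one, Matrix.one_mulVec]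
  · rintro x y _ _ ⟨e1, h1⟩ ⟨e2, h2⟩
    refine ⟨e1 * e2, ?_⟩
    rw [_root_.map_mul, Matrix.SpecialLinearGroup.coe_mul, ← Matrix.mulVec_mulVec, h2,
      Matrix.mulVec_smul, h1, smul_smul, mul_comm]
  · rintro x _ ⟨e, h⟩
    have hid : (ρ x⁻¹ : Matrix (Fin 2) (Fin 2) ℂ) *ᵥ ((ρ x : Matrix (Fin 2) (Fin 2) ℂ) *ᵥ v) = v := by
      rw [Matrix.mulVec_mulVec, ← Matrix.SpecialLinearGroup.coe_mul, ← _root_.map_mul,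
        inv_mul_cancel, _root_.map_one, Matrix.SpecialLinearGroup.coe_one, Matrix.one_mulVec]
    rw [h, Matrix.mulVec_smul] at hid
    have he : e ≠ 0 := by
      intro h0
      rw [h0, zero_smul] at hid
      exact hv hid.symm
    refine ⟨e⁻¹, ?_⟩
    have h2 := congrArg (fun w => e⁻¹ • w) hid
    simp only [smul_smul, inv_mul_cancel₀ he, one_smul] at h2
    exact h2

def conjRep {G : Type*} [Group G] (g : SL2C) (ρ : G →* SL2C) : G →* SL2C :=
  ((MulAut.conj g⁻¹).toMonoidHom).comp ρ

lemma conjRep_apply {G : Type*} [Group G] (g : SL2C) (ρ : G →* SL2C) (h : G) :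
    conjRep g ρ h = g⁻¹ * ρ h * g := by
  simp [conjRep, MulAut.conj_apply]

lemma coe_inv_mul (g : SL2C) :
    (g⁻¹ : SL2C) * (g : Matrix (Fin 2) (Fin 2) ℂ) = 1 := by
  rw [← Matrix.SpecialLinearGroup.coe_mul, inv_mul_cancel, Matrix.SpecialLinearGroup.coe_one]

lemma coe_mul_inv (g : SL2C) :
    (g : Matrix (Fin 2) (Fin 2) ℂ) * (g⁻¹ : SL2C) = 1 := by
  rw [← Matrix.SpecialLinearGroup.coe_mul, mul_inv_cancel, Matrix.SpecialLinearGroup.coe_one]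

lemma conjRep_trace {G : Type*} [Group G] (g : SL2C) (ρ : G →* SL2C) (h : G) :
    Matrix.trace ((conjRep g ρ h : SL2C) : Matrix (Fin 2) (Fin 2) ℂ)
      = Matrix.trace ((ρ h : SL2C) : Matrix (Fin 2) (Fin 2) ℂ) := by
  rw [conjRep_apply, Matrix.SpecialLinearGroup.coe_mul, Matrix.SpecialLinearGroup.coe_mul,
    Matrix.trace_mul_comm, ← Matrix.mul_assoc, coe_mul_inv, Matrix.one_mul]

lemma trace_conj_sl (u k : SL2C) :
    Matrix.trace (((u⁻¹ * k * u : SL2C)) : Matrix (Fin 2) (Fin 2) ℂ)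
      = Matrix.trace ((k : SL2C) : Matrix (Fin 2) (Fin 2) ℂ) := by
  rw [Matrix.SpecialLinearGroup.coe_mul, Matrix.SpecialLinearGroup.coe_mul,
    Matrix.trace_mul_comm, ← Matrix.mul_assoc, coe_mul_inv, Matrix.one_mul]

lemma conjRep_irred {G : Type*} [Group G] (g : SL2C) (ρ : G →* SL2C)
    (hirr : IsIrreducibleRep ρ) : IsIrreducibleRep (conjRep g ρ) := by
  rintro ⟨v, hv, hall⟩
  apply hirr
  refine ⟨(g : Matrix (Fin 2) (Fin 2) ℂ) *ᵥ v, ?_, ?_⟩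
  · intro h0
    apply hv
    have : (g⁻¹ : SL2C) *ᵥ ((g : Matrix (Fin 2) (Fin 2) ℂ) *ᵥ v) = v := by
      rw [Matrix.mulVec_mulVec, coe_inv_mul, Matrix.one_mulVec]
    rw [h0, Matrix.mulVec_zero] at this
    exact this.symm
  · intro h
    obtain ⟨c, hc⟩ := hall h
    refine ⟨c, ?_⟩
    have key : (ρ h : Matrix (Fin 2) (Fin 2) ℂ) * (g : Matrix (Fin 2) (Fin 2) ℂ)
        = (g : Matrix (Fin 2) (Fin 2) ℂ) * ((conjRep g ρ h : SL2C) : Matrix (Fin 2) (Fin 2) ℂ) := by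
      rw [conjRep_apply, Matrix.SpecialLinearGroup.coe_mul, Matrix.SpecialLinearGroup.coe_mul,
        ← Matrix.mul_assoc, ← Matrix.mul_assoc, coe_mul_inv, Matrix.one_mul]
    rw [Matrix.mulVec_mulVec, key, ← Matrix.mulVec_mulVec, hc, Matrix.mulVec_smul]

-- helpers to test first
lemma mulVec2 (M : Matrix (Fin 2) (Fin 2) ℂ) (v : Fin 2 → ℂ) (i : Fin 2) :
    (M *ᵥ v) i = M i 0 * v 0 + M i 1 * v 1 := by
  simp [Matrix.mulVec, dotProduct, Fin.sum_univ_two]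

lemma vec2_eq {v w : Fin 2 → ℂ} (h0 : v 0 = w 0) (h1 : v 1 = w 1) : v = w := by
  funext i; fin_cases i <;> assumption

lemma col_ne_zero (M : Matrix (Fin 2) (Fin 2) ℂ) (hM : M ≠ 0) :
    ∃ v : Fin 2 → ℂ, M *ᵥ v ≠ 0 := by
  by_contra hcon
  push_neg at hcon
  apply hM
  have h0 := hcon ![1, 0]
  have h1 := hcon ![0, 1]
  ext i j
  fin_cases j
  · have := congrFun h0 i
    rw [mulVec2] at this
    simpa using this
  · have := congrFun h1 i
    rw [mulVec2] at this
    simpa using this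


lemma unip_zpow (h : SL2C) (c : ℂ) (hc : (h : Matrix (Fin 2) (Fin 2) ℂ) = !![1,c;0,1]) (k : ℤ) :
    ∃ u : ℂ, ((h ^ k : SL2C) : Matrix (Fin 2) (Fin 2) ℂ) = !![1,u;0,1] := by
  have hinv : ((h⁻¹ : SL2C) : Matrix (Fin 2) (Fin 2) ℂ) = !![1,-c;0,1] := by
    rw [Matrix.SpecialLinearGroup.coe_inv, hc, Matrix.adjugate_fin_two]
    norm_num
  induction k using Int.induction_on with
  | zero => exact ⟨0, by rw [zpow_zero, Matrix.SpecialLinearGroup.coe_one, Matrix.one_fin_two]⟩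
  | succ n ih =>
      obtain ⟨u, hu⟩ := ih
      refine ⟨u + c, ?_⟩
      rw [_root_.zpow_add_one, Matrix.SpecialLinearGroup.coe_mul, hu, hc]
      ext i j
      fin_cases i <;> fin_cases j <;> simp [Matrix.mul_apply, Fin.sum_univ_two] <;> ring
  | pred n ih =>
      obtain ⟨u, hu⟩ := ih
      refine ⟨u - c, ?_⟩
      rw [_root_.zpow_sub_one, Matrix.SpecialLinearGroup.coe_mul, hu, hinv]
      ext i j
      fin_cases i <;> fin_cases j <;> simp [Matrix.mul_apply, Fin.sum_univ_two] <;> ring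

/-- If `ρ` is an irreducible representation of the two-bridge knot group with
`tr ρ(μ) = 2` or `tr ρ(μ) = −2`, then `tr ρ(λ) = −2`. -/
theorem trace_longitude_eq_neg_two (α β : ℤ) (hα1 : 1 < α) (hαodd : Odd α) (hβodd : Odd β)
    (hβl : -α < β) (hβu : β < α) (hcop : IsCoprime α β)
    (ρ : KnotGroup α β →* SL2C) (hirr : IsIrreducibleRep ρ)
    (htr : Matrix.trace ((ρ (meridian α β) : Matrix (Fin 2) (Fin 2) ℂ)) = 2 ∨
      Matrix.trace ((ρ (meridian α β) : Matrix (Fin 2) (Fin 2) ℂ)) = -2) :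
    Matrix.trace ((ρ (longitude α β) : Matrix (Fin 2) (Fin 2) ℂ)) = -2 := by

  have hv10 : (![1, 0] : Fin 2 → ℂ) ≠ 0 := by
    intro h
    have := congrFun h 0
    simp at this
  obtain ⟨t, ht2, htrt⟩ : ∃ t : ℂ, t * t = 1 ∧
      Matrix.trace ((ρ (xgen α β) : Matrix (Fin 2) (Fin 2) ℂ)) = t + t := by
    rcases htr with h | h
    · exact ⟨1, by norm_num, by rw [show meridian α β = xgen α β from rfl] at h; rw [h]; norm_num⟩
    · exact ⟨-1, by norm_num, by rw [show meridian α β = xgen α β from rfl] at h; rw [h]; norm_num⟩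
  set X0 : Matrix (Fin 2) (Fin 2) ℂ := ((ρ (xgen α β)) : Matrix (Fin 2) (Fin 2) ℂ) with hX0
  have hdetX0 : X0 0 0 * X0 1 1 - X0 0 1 * X0 1 0 = 1 := by
    rw [← Matrix.det_fin_two]
    exact Matrix.SpecialLinearGroup.det_coe _
  have htrX0 : X0 0 0 + X0 1 1 = t + t := by
    rw [← Matrix.trace_fin_two]
    exact htrt
  set N : Matrix (Fin 2) (Fin 2) ℂ := X0 - t • 1 with hNdef
  have hNX : X0 = N + t • 1 := by rw [hNdef]; abel
  have hNsq : N * N = 0 := by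
    ext i j
    rw [hNdef]
    fin_cases i <;> fin_cases j
    · simp [Matrix.mul_apply, Fin.sum_univ_two, Matrix.sub_apply, Matrix.smul_apply,
        Matrix.one_apply]
      linear_combination X0 0 0 * htrX0 - hdetX0 + ht2
    · simp [Matrix.mul_apply, Fin.sum_univ_two, Matrix.sub_apply, Matrix.smul_apply,
        Matrix.one_apply]
      linear_combination X0 0 1 * htrX0
    · simp [Matrix.mul_apply, Fin.sum_univ_two, Matrix.sub_apply, Matrix.smul_apply,
        Matrix.one_apply]
      linear_combination X0 1 0 * htrX0
    · simp [Matrix.mul_apply, Fin.sum_univ_two, Matrix.sub_apply, Matrix.smul_apply,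
        Matrix.one_apply]
      linear_combination X0 1 1 * htrX0 - hdetX0 + ht2
  have hsm : ∀ w : Fin 2 → ℂ, ((t • (1 : Matrix (Fin 2) (Fin 2) ℂ)) *ᵥ w) = t • w := by
    intro w
    rw [Matrix.smul_mulVec, Matrix.one_mulVec]
  have hrelG := x_mul_w_eq α β
  have hyconj : ygen α β = (wordG α β (xgen α β) (ygen α β))⁻¹ * xgen α β *
      wordG α β (xgen α β) (ygen α β) := by
    rw [mul_assoc, eq_inv_mul_iff_mul_eq]
    exact hrelG.symm
  have hNne : N ≠ 0 := by
    intro h0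
    have hX0t : X0 = t • 1 := by rw [hNX, h0, zero_add]
    have hY0 : ((ρ (ygen α β)) : Matrix (Fin 2) (Fin 2) ℂ) = t • 1 := by
      have e : ρ (ygen α β) = (ρ (wordG α β (xgen α β) (ygen α β)))⁻¹ *
          ρ (xgen α β) * ρ (wordG α β (xgen α β) (ygen α β)) := by
        rw [← _root_.map_inv, ← _root_.map_mul, ← _root_.map_mul, ← hyconj]
      rw [e, Matrix.SpecialLinearGroup.coe_mul, Matrix.SpecialLinearGroup.coe_mul, ← hX0, hX0t,
        mul_smul_comm, mul_one, smul_mul_assoc, coe_inv_mul]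
    apply hirr
    refine ⟨![1,0], hv10, eigen_all ρ ![1,0] hv10 t t ?_ ?_⟩
    · rw [← hX0, hX0t, hsm]
    · rw [hY0, hsm]
  obtain ⟨v, hvne⟩ := col_ne_zero N hNne
  set v1 : Fin 2 → ℂ := N *ᵥ v with hv1def
  have hNv1 : N *ᵥ v1 = 0 := by rw [hv1def, Matrix.mulVec_mulVec, hNsq, Matrix.zero_mulVec]
  have hX0v1 : X0 *ᵥ v1 = t • v1 := by
    rw [hNX, Matrix.add_mulVec, hNv1, hsm, zero_add]
  have hX0v : X0 *ᵥ v = v1 + t • v := by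
    rw [hNX, Matrix.add_mulVec, ← hv1def, hsm]
  set C0 : Matrix (Fin 2) (Fin 2) ℂ := Matrix.of ![![v1 0, v 0], ![v1 1, v 1]] with hC0
  have hC0e : ∀ i : Fin 2, C0 i 0 = v1 i ∧ C0 i 1 = v i := by
    intro i
    fin_cases i <;> exact ⟨by simp [hC0], by simp [hC0]⟩
  have hdetC0 : C0.det ≠ 0 := by
    rw [Matrix.det_fin_two]
    rw [(hC0e 0).1, (hC0e 0).2, (hC0e 1).1, (hC0e 1).2]
    intro hd
    have hv1or : v1 0 ≠ 0 ∨ v1 1 ≠ 0 := by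
      by_contra hno
      push_neg at hno
      exact hvne (vec2_eq hno.1 hno.2)
    have hveq : ∃ k : ℂ, v = k • v1 := by
      rcases hv1or with h | h
      · refine ⟨v 0 / v1 0, vec2_eq ?_ ?_⟩
        · simp only [Pi.smul_apply, smul_eq_mul]
          field_simp
        · simp only [Pi.smul_apply, smul_eq_mul]
          field_simp
          linear_combination hd
      · refine ⟨v 1 / v1 1, vec2_eq ?_ ?_⟩
        · simp only [Pi.smul_apply, smul_eq_mul]
          field_simp
          linear_combination -hd
        · simp only [Pi.smul_apply, smul_eq_mul]
          field_simp
    obtain ⟨k, hk⟩ := hveq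
    apply hvne
    rw [hv1def, hk, Matrix.mulVec_smul, hNv1, smul_zero]
  have e1 : ∀ i, X0 i 0 * v1 0 + X0 i 1 * v1 1 = t * v1 i := by
    intro i
    have h := congrFun hX0v1 i
    rw [mulVec2] at h
    simpa using h
  have e2 : ∀ i, X0 i 0 * v 0 + X0 i 1 * v 1 = v1 i + t * v i := by
    intro i
    have h := congrFun hX0v i
    rw [mulVec2] at h
    simpa using h
  have hXC : X0 * C0 = C0 * !![t, 1; 0, t] := by
    ext i j
    simp only [Matrix.mul_apply, Fin.sum_univ_two]
    fin_cases i <;> fin_cases j <;>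
      · simp [hC0]
        try linear_combination e1 0
        try linear_combination e1 1
        try linear_combination e2 0
        try linear_combination e2 1
  obtain ⟨s, hs⟩ := IsAlgClosed.exists_pow_nat_eq (k := ℂ) C0.det (n := 2) (by norm_num)
  have hsne : s ≠ 0 := by
    intro h
    rw [h] at hs
    apply hdetC0
    rw [← hs]
    norm_num
  have hdetg1 : (s⁻¹ • C0).det = 1 := by
    rw [Matrix.det_smul, ← hs]
    simp [Fintype.card_fin, inv_pow]
    exact inv_mul_cancel₀ (pow_ne_zero 2 hsne)
  set g1 : SL2C := ⟨s⁻¹ • C0, hdetg1⟩ with hg1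
  set ρ1 := conjRep g1 ρ with hρ1
  have hcoeX1 : ((ρ1 (xgen α β)) : Matrix (Fin 2) (Fin 2) ℂ) = !![t,1;0,t] := by
    have hcomm : X0 * ((g1 : SL2C) : Matrix (Fin 2) (Fin 2) ℂ)
        = ((g1 : SL2C) : Matrix (Fin 2) (Fin 2) ℂ) * !![t,1;0,t] := by
      show X0 * (s⁻¹ • C0) = (s⁻¹ • C0) * !![t,1;0,t]
      rw [mul_smul_comm, smul_mul_assoc, hXC]
    rw [hρ1, conjRep_apply, Matrix.SpecialLinearGroup.coe_mul, Matrix.SpecialLinearGroup.coe_mul,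
      ← hX0, Matrix.mul_assoc, hcomm, ← Matrix.mul_assoc, coe_inv_mul, Matrix.one_mul]
  set Ym1 : Matrix (Fin 2) (Fin 2) ℂ := ((ρ1 (ygen α β)) : Matrix (Fin 2) (Fin 2) ℂ) with hYm1
  have hdetY1 : Ym1 0 0 * Ym1 1 1 - Ym1 0 1 * Ym1 1 0 = 1 := by
    rw [← Matrix.det_fin_two]
    exact Matrix.SpecialLinearGroup.det_coe _
  have htrY1 : Ym1 0 0 + Ym1 1 1 = t + t := by
    rw [← Matrix.trace_fin_two]
    have e : ρ1 (ygen α β) = (ρ1 (wordG α β (xgen α β) (ygen α β)))⁻¹ *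
        ρ1 (xgen α β) * ρ1 (wordG α β (xgen α β) (ygen α β)) := by
      rw [← _root_.map_inv, ← _root_.map_mul, ← _root_.map_mul, ← hyconj]
    rw [hYm1, e, trace_conj_sl, hcoeX1, Matrix.trace_fin_two]
    simp
  have hirr1 : IsIrreducibleRep ρ1 := conjRep_irred g1 ρ hirr
  have hTv : (!![t,1;0,t] : Matrix (Fin 2) (Fin 2) ℂ) *ᵥ ![1,0] = t • ![1,0] := by
    funext i
    rw [mulVec2]
    fin_cases i <;> simp
  have hrne : Ym1 1 0 ≠ 0 := by
    intro hr0
    apply hirr1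
    refine ⟨![1,0], hv10, eigen_all ρ1 ![1,0] hv10 t (Ym1 0 0) ?_ ?_⟩
    · rw [hcoeX1]
      exact hTv
    · rw [← hYm1]
      funext i
      rw [mulVec2]
      fin_cases i
      · simp
      · simp [hr0]
  set dd : ℂ := (Ym1 0 0 - t) / Ym1 1 0 with hdd
  have hdetg2 : (!![1, dd; 0, 1] : Matrix (Fin 2) (Fin 2) ℂ).det = 1 := by
    rw [Matrix.det_fin_two_of]
    ring
  set g2 : SL2C := ⟨!![1, dd; 0, 1], hdetg2⟩ with hg2
  have hg2coe : ((g2 : SL2C) : Matrix (Fin 2) (Fin 2) ℂ) = !![1, dd; 0, 1] := rfl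
  have hg2inv : ((g2⁻¹ : SL2C) : Matrix (Fin 2) (Fin 2) ℂ) = !![1, -dd; 0, 1] := by
    rw [Matrix.SpecialLinearGroup.coe_inv, hg2coe, Matrix.adjugate_fin_two]
    norm_num
  set ρ2 := conjRep g2 ρ1 with hρ2
  have hX2 : ((ρ2 (xgen α β)) : Matrix (Fin 2) (Fin 2) ℂ) = !![t,1;0,t] := by
    rw [hρ2, conjRep_apply, Matrix.SpecialLinearGroup.coe_mul, Matrix.SpecialLinearGroup.coe_mul,
      hcoeX1, hg2inv, hg2coe]
    ext i j
    fin_cases i <;> fin_cases j <;>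
      · simp [Matrix.mul_apply, Fin.sum_univ_two]
        try ring
  have hY2e : ((ρ2 (ygen α β)) : Matrix (Fin 2) (Fin 2) ℂ) = !![1, -dd; 0, 1] * Ym1 * !![1, dd; 0, 1] := by
    rw [hρ2, conjRep_apply, Matrix.SpecialLinearGroup.coe_mul, Matrix.SpecialLinearGroup.coe_mul,
      ← hYm1, hg2inv, hg2coe]
  have e00 : ((ρ2 (ygen α β)) : Matrix (Fin 2) (Fin 2) ℂ) 0 0 = Ym1 0 0 - dd * Ym1 1 0 := by
    rw [hY2e]
    simp only [Matrix.mul_apply, Fin.sum_univ_two]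
    simp
    try ring
  have e10 : ((ρ2 (ygen α β)) : Matrix (Fin 2) (Fin 2) ℂ) 1 0 = Ym1 1 0 := by
    rw [hY2e]
    simp only [Matrix.mul_apply, Fin.sum_univ_two]
    simp
    try ring
  have e11 : ((ρ2 (ygen α β)) : Matrix (Fin 2) (Fin 2) ℂ) 1 1 = Ym1 1 0 * dd + Ym1 1 1 := by
    rw [hY2e]
    simp only [Matrix.mul_apply, Fin.sum_univ_two]
    simp
    try ring
  have hddmul : dd * Ym1 1 0 = Ym1 0 0 - t := by
    rw [hdd]
    exact div_mul_cancel₀ _ hrne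
  have h00 : ((ρ2 (ygen α β)) : Matrix (Fin 2) (Fin 2) ℂ) 0 0 = t := by
    rw [e00, hddmul]
    ring
  have h11 : ((ρ2 (ygen α β)) : Matrix (Fin 2) (Fin 2) ℂ) 1 1 = t := by
    rw [e11, mul_comm (Ym1 1 0) dd, hddmul]
    linear_combination htrY1
  have hdetM2 : ((ρ2 (ygen α β)) : Matrix (Fin 2) (Fin 2) ℂ) 0 0 *
      ((ρ2 (ygen α β)) : Matrix (Fin 2) (Fin 2) ℂ) 1 1 -
      ((ρ2 (ygen α β)) : Matrix (Fin 2) (Fin 2) ℂ) 0 1 *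
      ((ρ2 (ygen α β)) : Matrix (Fin 2) (Fin 2) ℂ) 1 0 = 1 := by
    rw [← Matrix.det_fin_two]
    exact Matrix.SpecialLinearGroup.det_coe _
  have h01 : ((ρ2 (ygen α β)) : Matrix (Fin 2) (Fin 2) ℂ) 0 1 = 0 := by
    rw [h00, h11, e10] at hdetM2
    have hx : ((ρ2 (ygen α β)) : Matrix (Fin 2) (Fin 2) ℂ) 0 1 * Ym1 1 0 = 0 := by
      linear_combination ht2 - hdetM2
    exact (mul_eq_zero.mp hx).resolve_right hrne
  have hM2 : ((ρ2 (ygen α β)) : Matrix (Fin 2) (Fin 2) ℂ) = !![t, 0; Ym1 1 0, t] := by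
    ext i j
    fin_cases i <;> fin_cases j <;> simp [h00, h01, e10, h11]
  set Wsl : SL2C := ρ2 (wordG α β (xgen α β) (ygen α β)) with hWsl
  have hrel2 : ρ2 (xgen α β) * Wsl = Wsl * ρ2 (ygen α β) := by
    rw [hWsl, ← _root_.map_mul, ← _root_.map_mul, hrelG]
  have hrelm : !![t,1;0,t] * (Wsl : Matrix (Fin 2) (Fin 2) ℂ)
      = (Wsl : Matrix (Fin 2) (Fin 2) ℂ) * !![t, 0; Ym1 1 0, t] := by
    have hc := congrArg (fun z : SL2C => (z : Matrix (Fin 2) (Fin 2) ℂ)) hrel2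
    simp only [Matrix.SpecialLinearGroup.coe_mul] at hc
    rw [hX2, hM2] at hc
    exact hc
  have hW11 : (Wsl : Matrix (Fin 2) (Fin 2) ℂ) 1 1 = 0 := by
    have h := congrFun (congrFun hrelm 0) 1
    simp only [Matrix.mul_apply, Fin.sum_univ_two] at h
    simp at h
    linear_combination h
  have hW10 : (Wsl : Matrix (Fin 2) (Fin 2) ℂ) 1 0
      = Ym1 1 0 * (Wsl : Matrix (Fin 2) (Fin 2) ℂ) 0 1 := by
    have h := congrFun (congrFun hrelm 0) 0
    simp only [Matrix.mul_apply, Fin.sum_univ_two] at h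
    simp at h
    linear_combination h
  have hdetW : (Wsl : Matrix (Fin 2) (Fin 2) ℂ) 0 0 * (Wsl : Matrix (Fin 2) (Fin 2) ℂ) 1 1
      - (Wsl : Matrix (Fin 2) (Fin 2) ℂ) 0 1 * (Wsl : Matrix (Fin 2) (Fin 2) ℂ) 1 0 = 1 := by
    rw [← Matrix.det_fin_two]
    exact Matrix.SpecialLinearGroup.det_coe _
  have hb : (Wsl : Matrix (Fin 2) (Fin 2) ℂ) 0 1 *
      (Ym1 1 0 * (Wsl : Matrix (Fin 2) (Fin 2) ℂ) 0 1) = -1 := by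
    rw [hW11, hW10] at hdetW
    linear_combination -hdetW
  have hphiX : phiSL (ρ2 (xgen α β)) = ρ2 (xgen α β) := by
    apply Subtype.ext
    rw [phiSL_coe, hX2]
    norm_num
  have hphiY : phiSL (ρ2 (ygen α β)) = ρ2 (ygen α β) := by
    apply Subtype.ext
    rw [phiSL_coe, hM2]
    norm_num
  have hWstar : ρ2 (wordStarG α β (xgen α β) (ygen α β)) = phiSL Wsl := by
    rw [map_wordStarG, wordStar_eq_phi α β hα1 hαodd hβodd hcop _ _ hphiX hphiY, ← map_wordG, ← hWsl]
  have hlong : ρ2 (longitude α β) = ρ2 (xgen α β) ^ (2 * nval α β) * Wsl * phiSL Wsl := by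
    rw [show longitude α β = xgen α β ^ (2 * nval α β) * wordG α β (xgen α β) (ygen α β) *
        wordStarG α β (xgen α β) (ygen α β) from rfl,
      _root_.map_mul, _root_.map_mul, _root_.map_zpow, hWstar, ← hWsl]
  have htreq : Matrix.trace ((ρ (longitude α β) : Matrix (Fin 2) (Fin 2) ℂ))
      = Matrix.trace (((ρ2 (longitude α β)) : Matrix (Fin 2) (Fin 2) ℂ)) := by
    rw [hρ2, hρ1, conjRep_trace, conjRep_trace]
  have hXsq : ((ρ2 (xgen α β) ^ (2:ℤ) : SL2C) : Matrix (Fin 2) (Fin 2) ℂ) = !![1, t+t; 0, 1] := by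
    rw [zpow_two, Matrix.SpecialLinearGroup.coe_mul, hX2]
    ext i j
    fin_cases i <;> fin_cases j
    · simp [Matrix.mul_apply, Fin.sum_univ_two]
      linear_combination ht2
    · simp [Matrix.mul_apply, Fin.sum_univ_two]
      try ring
    · simp [Matrix.mul_apply, Fin.sum_univ_two]
    · simp [Matrix.mul_apply, Fin.sum_univ_two]
      linear_combination ht2
  obtain ⟨u, hu⟩ := unip_zpow (ρ2 (xgen α β) ^ (2:ℤ)) (t+t) hXsq (nval α β)
  have hXpow : ((ρ2 (xgen α β) ^ (2 * nval α β) : SL2C) : Matrix (Fin 2) (Fin 2) ℂ)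
      = !![1,u;0,1] := by
    rw [_root_.zpow_mul]
    exact hu
  rw [htreq, hlong, Matrix.SpecialLinearGroup.coe_mul, Matrix.SpecialLinearGroup.coe_mul,
    hXpow, phiSL_coe, Matrix.trace_fin_two]
  simp only [Matrix.mul_apply, Fin.sum_univ_two]
  simp [hW11, hW10]
  linear_combination (2:ℂ) * hb

end
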